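/- If f, g ∈ ℝ[z₁,…,zₙ] are non-zero real stable polynomials such that both f ≪ g and g ≪ f, then f = α·g for some real constant α. -/

import Mathlib

open MvPolynomial

/-- A complex polynomial is *stable* if it is non-vanishing whenever all
variables lie in the open upper half-plane. -/
def IsStable {σ : Type*} (f : MvPolynomial σ ℂ) : Prop :=
  ∀ z : σ → ℂ, (∀ i, 0 < (z i).im) → MvPolynomial.eval z f ≠ 0

/-- A real polynomial is *real stable* if it is non-vanishing whenever all
variables lie in the open upper half-plane. -/
def IsRealStable {σ : Type*} (f : MvPolynomial σ ℝ) : Prop :=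
  ∀ z : σ → ℂ, (∀ i, 0 < (z i).im) → MvPolynomial.aeval z f ≠ 0

/-- `ProperPosition f g` means `f ≪ g`, i.e. `g + i·f` is stable. -/
def ProperPosition {σ : Type*} (f g : MvPolynomial σ ℝ) : Prop :=
  IsStable (MvPolynomial.map (algebraMap ℝ ℂ) g +
    Complex.I • MvPolynomial.map (algebraMap ℝ ℂ) f)

lemma properPosition_aeval {σ : Type*} {f g : MvPolynomial σ ℝ} (hfg : ProperPosition f g)
    (z : σ → ℂ) (hz : ∀ i, 0 < (z i).im) :
    MvPolynomial.aeval z g + Complex.I * MvPolynomial.aeval z f ≠ 0 := by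
  have := hfg z hz
  have heq : MvPolynomial.eval z (MvPolynomial.map (algebraMap ℝ ℂ) g +
      Complex.I • MvPolynomial.map (algebraMap ℝ ℂ) f)
      = MvPolynomial.aeval z g + Complex.I * MvPolynomial.aeval z f := by
    simp [MvPolynomial.smul_eq_C_mul, MvPolynomial.eval_map, MvPolynomial.aeval_def]
  rwa [heq] at this

section proofs

variable {n : ℕ}

noncomputable def lineRestrict (n : ℕ) (h : MvPolynomial (Fin n) ℝ) (a b : Fin n → ℝ) : Polynomial ℝ :=
  MvPolynomial.aeval (fun i => Polynomial.C (a i) + Polynomial.C (b i) * Polynomial.X) h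

lemma lineRestrict_aevalC (h : MvPolynomial (Fin n) ℝ) (a b : Fin n → ℝ) (t : ℂ) :
    Polynomial.aeval t (lineRestrict n h a b) =
      MvPolynomial.aeval (fun i => (a i : ℂ) + (b i : ℂ) * t) h := by
  rw [lineRestrict, ← AlgHom.comp_apply, MvPolynomial.comp_aeval]
  have hfun : (fun i => Polynomial.aeval t (Polynomial.C (a i) + Polynomial.C (b i) * Polynomial.X))
      = fun i => (a i : ℂ) + (b i : ℂ) * t := by
    funext i; simp
  rw [hfun]

lemma lineRestrict_evalR (h : MvPolynomial (Fin n) ℝ) (a b : Fin n → ℝ) (t : ℝ) :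
    Polynomial.eval t (lineRestrict n h a b) =
      MvPolynomial.eval (fun i => a i + b i * t) h := by
  have h1 : Polynomial.aeval t (lineRestrict n h a b) =
      MvPolynomial.aeval (fun i => a i + b i * t) h := by
    rw [lineRestrict, ← AlgHom.comp_apply, MvPolynomial.comp_aeval]
    have hfun : (fun i => Polynomial.aeval t (Polynomial.C (a i) + Polynomial.C (b i) * Polynomial.X))
        = fun i => a i + b i * t := by
      funext i; simp
    rw [hfun]
  rw [← Polynomial.coe_aeval_eq_eval, h1, ← MvPolynomial.coe_aeval_eq_eval]
  rfl

lemma conj_aeval' (p : Polynomial ℝ) (z : ℂ) :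
    Polynomial.aeval ((starRingEnd ℂ) z) p = (starRingEnd ℂ) (Polynomial.aeval z p) := by
  rw [Polynomial.aeval_def, Polynomial.aeval_def, Polynomial.hom_eval₂]
  congr 1
  ext r
  simp

lemma univ_prop (p q : Polynomial ℝ) (hq : q ≠ 0)
    (h1 : ∀ t : ℂ, 0 < t.im → Polynomial.aeval t q + Complex.I * Polynomial.aeval t p ≠ 0)
    (h2 : ∀ t : ℂ, 0 < t.im → Polynomial.aeval t p + Complex.I * Polynomial.aeval t q ≠ 0) :
    ∃ c : ℝ, p = c • q := by
  set F : Polynomial ℂ := q.map (algebraMap ℝ ℂ) + Polynomial.C Complex.I * p.map (algebraMap ℝ ℂ) with hF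
  have hevalF : ∀ t : ℂ, F.eval t = Polynomial.aeval t q + Complex.I * Polynomial.aeval t p := by
    intro t
    simp [hF, Polynomial.aeval_def, Polynomial.eval_map]
  have hroots : ∀ r ∈ F.roots, r.im = 0 := by
    intro r hr
    obtain ⟨-, hr0⟩ := Polynomial.mem_roots'.mp hr
    have hr0' : Polynomial.aeval r q + Complex.I * Polynomial.aeval r p = 0 := by
      rw [← hevalF]; exact hr0
    rcases lt_trichotomy r.im 0 with h | h | h
    · exfalso
      have him : 0 < ((starRingEnd ℂ) r).im := by simpa using h
      apply h2 _ him
      rw [conj_aeval', conj_aeval']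
      have := congrArg (starRingEnd ℂ) hr0'
      simp only [map_add, map_mul, Complex.conj_I, map_zero] at this
      linear_combination Complex.I * this + (starRingEnd ℂ) ((Polynomial.aeval r) p) * Complex.I_sq
    · exact h
    · exact absurd hr0' (h1 r h)
  have hsplits : F.Splits := IsAlgClosed.splits F
  have hfac := Polynomial.Splits.eq_prod_roots hsplits
  set R : Polynomial ℝ := (F.roots.map (fun r => Polynomial.X - Polynomial.C r.re)).prod with hRdef
  have hRmap : R.map (algebraMap ℝ ℂ) = (F.roots.map (fun a => Polynomial.X - Polynomial.C a)).prod := by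
    rw [hRdef, Polynomial.map_multiset_prod, Multiset.map_map]
    apply congrArg
    apply Multiset.map_congr rfl
    intro r hr
    have : ((r.re : ℂ)) = r := by
      apply Complex.ext <;> simp [hroots r hr]
    simp [this]
  set c : ℂ := F.leadingCoeff with hc
  have hFc : F = Polynomial.C c * R.map (algebraMap ℝ ℂ) := by rw [hRmap]; exact hfac
  have hcoeff : ∀ k, (q.coeff k : ℂ) + Complex.I * (p.coeff k) = c * (R.coeff k) := by
    intro k
    have := congrArg (fun P => Polynomial.coeff P k) hFc
    simpa [hF, Polynomial.coeff_map, mul_comm] using this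
  have hqc : ∀ k, q.coeff k = c.re * R.coeff k := by
    intro k
    have := congrArg Complex.re (hcoeff k)
    simpa using this
  have hpc : ∀ k, p.coeff k = c.im * R.coeff k := by
    intro k
    have := congrArg Complex.im (hcoeff k)
    simpa using this
  have hcre : c.re ≠ 0 := by
    intro h0
    apply hq
    ext k
    simp [hqc k, h0]
  refine ⟨c.im / c.re, ?_⟩
  ext k
  rw [Polynomial.coeff_smul, smul_eq_mul, hqc k, hpc k]
  field_simp

end proofs


/-- If `f, g` are non-zero real stable polynomials with `f ≪ g` and `g ≪ f`,
then `f` is a real constant multiple of `g`. -/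
theorem proper_position_symm_imp_proportional (n : ℕ)
    (f g : MvPolynomial (Fin n) ℝ) (hf : f ≠ 0) (hg : g ≠ 0)
    (hfs : IsRealStable f) (hgs : IsRealStable g)
    (hfg : ProperPosition f g) (hgf : ProperPosition g f) :
    ∃ α : ℝ, f = α • g := by
  -- nonvanishing of line restrictions of g
  have hlineg : ∀ (a b : Fin n → ℝ), (∀ i, 0 < b i) → lineRestrict n g a b ≠ 0 := by
    intro a b hb hzero
    have h0 : Polynomial.aeval (Complex.I) (lineRestrict n g a b) = 0 := by
      rw [hzero]; simp
    rw [lineRestrict_aevalC] at h0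
    exact hgs _ (fun i => by simp [hb i]) h0
  -- proportionality along every line with positive direction
  have line_prop : ∀ (a b : Fin n → ℝ), (∀ i, 0 < b i) → ∃ c : ℝ, ∀ t : ℝ,
      MvPolynomial.eval (fun i => a i + b i * t) f = c * MvPolynomial.eval (fun i => a i + b i * t) g := by
    intro a b hb
    obtain ⟨c, hc⟩ := univ_prop (lineRestrict n f a b) (lineRestrict n g a b) (hlineg a b hb)
      (by
        intro t ht
        rw [lineRestrict_aevalC, lineRestrict_aevalC]
        exact properPosition_aeval hfg _ (fun i => by
          simp only [Complex.add_im, Complex.ofReal_im, Complex.mul_im, Complex.ofReal_re, zero_add,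
            zero_mul, add_zero, mul_zero]
          exact mul_pos (hb i) ht))
      (by
        intro t ht
        rw [lineRestrict_aevalC, lineRestrict_aevalC]
        exact properPosition_aeval hgf _ (fun i => by
          simp only [Complex.add_im, Complex.ofReal_im, Complex.mul_im, Complex.ofReal_re, zero_add,
            zero_mul, add_zero, mul_zero]
          exact mul_pos (hb i) ht))
    refine ⟨c, fun t => ?_⟩
    rw [← lineRestrict_evalR, ← lineRestrict_evalR, hc]
    simp
  -- cross identity
  have cross : ∀ (x y : Fin n → ℝ), (∀ i, x i < y i) →
      MvPolynomial.eval x f * MvPolynomial.eval y g = MvPolynomial.eval y f * MvPolynomial.eval x g := by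
    intro x y hxy
    obtain ⟨c, hc⟩ := line_prop x (fun i => y i - x i) (fun i => by linarith [hxy i])
    have h0 := hc 0
    have h1 := hc 1
    have hx0 : (fun i => x i + (y i - x i) * 0) = x := by funext i; ring
    have hx1 : (fun i => x i + (y i - x i) * 1) = y := by funext i; ring
    rw [hx0] at h0
    rw [hx1] at h1
    rw [h0, h1]
    ring
  -- base point
  have hx0 : ∃ x : Fin n → ℝ, MvPolynomial.eval x g ≠ 0 := by
    by_contra hcon
    push_neg at hcon
    exact hg (MvPolynomial.funext (fun x => by simp [hcon x]))
  obtain ⟨x₀, hx₀⟩ := hx0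
  set c : ℝ := MvPolynomial.eval x₀ f / MvPolynomial.eval x₀ g with hcdef
  have key : ∀ x : Fin n → ℝ, MvPolynomial.eval x f = c * MvPolynomial.eval x g := by
    intro x
    set w : Fin n → ℝ := fun i => max (x i) (x₀ i) with hw
    have hq := hlineg w (fun _ => 1) (fun i => one_pos)
    obtain ⟨s, hs, hsr⟩ := (Set.Ioi_infinite (0:ℝ)).exists_notMem_finset
      (lineRestrict n g w (fun _ => 1)).roots.toFinset
    have hgz : MvPolynomial.eval (fun i => w i + s) g ≠ 0 := by
      intro h0
      apply hsr
      rw [Multiset.mem_toFinset, Polynomial.mem_roots']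
      refine ⟨hq, ?_⟩
      rw [Polynomial.IsRoot, lineRestrict_evalR]
      rw [show (fun i : Fin n => w i + 1 * s) = (fun i => w i + s) from by funext i; ring]
      exact h0
    set z : Fin n → ℝ := fun i => w i + s with hz
    have hxz : ∀ i, x i < z i := fun i => by
      have : (0:ℝ) < s := hs
      have := le_max_left (x i) (x₀ i)
      simp only [hz, hw]
      linarith
    have hx₀z : ∀ i, x₀ i < z i := fun i => by
      have : (0:ℝ) < s := hs
      have := le_max_right (x i) (x₀ i)
      simp only [hz, hw]
      linarith
    have c1 := cross x z hxz
    have c2 := cross x₀ z hx₀z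
    -- f(z) = c * g(z)
    have hfz : MvPolynomial.eval z f = c * MvPolynomial.eval z g := by
      rw [hcdef]
      field_simp
      linear_combination -c2
    apply mul_right_cancel₀ hgz
    linear_combination c1 + (MvPolynomial.eval x g) * hfz
  refine ⟨c, MvPolynomial.funext (fun x => ?_)⟩
  rw [key x, MvPolynomial.smul_eq_C_mul, map_mul, MvPolynomial.eval_C]
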